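/- Let C₁ ⊆ C ⊆ C₂ be convex bodies in ℝ³. Then the set Ext C \ (∂C₁ ∪ ∂C₂ ∪ closure(Sing C)) has no isolated points: for every ξ in this set and every ε > 0, the punctured ball B_ε(ξ) \ {ξ} contains another point of this set. -/

import Mathlib

open Set Metric

noncomputable section

/-- The space `ℝ³`. -/
abbrev E3 : Type := EuclideanSpace ℝ (Fin 3)

/-- A convex body in `ℝ³`: a compact convex set with nonempty interior. -/
def IsConvexBody (C : Set E3) : Prop :=
  IsCompact C ∧ Convex ℝ C ∧ (interior C).Nonempty

/-- `n` is an outward unit normal to the set `C` at the point `ξ`. -/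
def IsOutwardNormal (C : Set E3) (ξ n : E3) : Prop :=
  ‖n‖ = 1 ∧ ∀ x ∈ C, (inner ℝ (x - ξ) n : ℝ) ≤ 0

/-- The singular points of the boundary of `C`: boundary points with at least two distinct
outward unit normals. -/
def SingPts (C : Set E3) : Set E3 :=
  {ξ | ξ ∈ frontier C ∧
    ∃ n₁ n₂ : E3, n₁ ≠ n₂ ∧ IsOutwardNormal C ξ n₁ ∧ IsOutwardNormal C ξ n₂}

/-- Padding lemma: sums over `Fin 4` via a finset of card ≤ 4. -/
lemma pad_sum {M : Type*} [AddCommMonoid M] (t : Finset E3) (hc : t.card ≤ 4)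
    (F : E3 → M) :
    ∑ i : Fin 4, (if h : (i : ℕ) < t.card then F ((t.equivFin.symm ⟨(i : ℕ), h⟩ : E3)) else 0)
      = ∑ y ∈ t, F y := by
  have step1 : ∑ i : Fin 4, (if h : (i : ℕ) < t.card then F ((t.equivFin.symm ⟨(i : ℕ), h⟩ : E3)) else 0)
      = ∑ i ∈ Finset.univ.map (Fin.castLEEmb hc),
          (if h : (i : ℕ) < t.card then F ((t.equivFin.symm ⟨(i : ℕ), h⟩ : E3)) else 0) := by
    refine (Finset.sum_subset (Finset.subset_univ _) ?_).symm
    intro i _ hi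
    rw [dif_neg]
    intro h
    exact hi (Finset.mem_map.2 ⟨⟨(i : ℕ), h⟩, Finset.mem_univ _, Fin.ext rfl⟩)
  rw [step1, Finset.sum_map]
  have step2 : ∀ j : Fin t.card,
      (if h : (((Fin.castLEEmb hc) j : Fin 4) : ℕ) < t.card
        then F ((t.equivFin.symm ⟨(((Fin.castLEEmb hc) j : Fin 4) : ℕ), h⟩ : E3)) else 0)
      = F ((t.equivFin.symm j : E3)) := by
    intro j
    have hj : (((Fin.castLEEmb hc) j : Fin 4) : ℕ) < t.card := by simpa using j.2
    rw [dif_pos hj]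
    congr 1
  rw [Finset.sum_congr rfl (fun j _ => step2 j),
    Equiv.sum_comp t.equivFin.symm (fun y => F (y : E3)), Finset.sum_coe_sort t F]

/-- The convex hull of a compact set in `ℝ³` is compact (Carathéodory). -/
lemma isCompact_convexHull_E3 {s : Set E3} (hs : IsCompact s) :
    IsCompact (convexHull ℝ s) := by
  rcases s.eq_empty_or_nonempty with rfl | ⟨y₀, hy₀⟩
  · simp
  have key : convexHull ℝ s =
      (fun p : (Fin 4 → ℝ) × (Fin 4 → E3) => ∑ i, p.1 i • p.2 i) ''
        (stdSimplex ℝ (Fin 4) ×ˢ Set.univ.pi fun _ : Fin 4 => s) := by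
    apply Set.Subset.antisymm
    · intro x hx
      rw [convexHull_eq_union] at hx
      simp only [Set.mem_iUnion] at hx
      obtain ⟨t, hts, hai, hx⟩ := hx
      have hc : t.card ≤ 4 := by
        rcases t.eq_empty_or_nonempty with rfl | hne
        · simp
        · haveI : Nonempty ↥t := hne.to_subtype
          have h1 := hai.finrank_vectorSpan_add_one
          have h2 : Module.finrank ℝ ↥(vectorSpan ℝ (Set.range (Subtype.val : ↥t → E3))) ≤ 3 := by
            have := Submodule.finrank_le (vectorSpan ℝ (Set.range (Subtype.val : ↥t → E3)))
            simpa [finrank_euclideanSpace_fin] using this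
          have h3 : Fintype.card ↥t = t.card := Fintype.card_coe t
          omega
      rw [Finset.convexHull_eq] at hx
      obtain ⟨w, hw0, hw1, hwx⟩ := hx
      rw [Finset.centerMass_eq_of_sum_1 _ _ hw1] at hwx
      simp only [id] at hwx
      refine ⟨(fun i => if h : (i : ℕ) < t.card then w ((t.equivFin.symm ⟨(i : ℕ), h⟩ : E3)) else 0,
        fun i => if h : (i : ℕ) < t.card then ((t.equivFin.symm ⟨(i : ℕ), h⟩ : E3)) else y₀),
        ⟨⟨?_, ?_⟩, ?_⟩, ?_⟩
      · intro i
        dsimp only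
        split_ifs with h
        · exact hw0 _ (Finset.coe_mem _)
        · exact le_rfl
      · exact (pad_sum t hc w).trans hw1
      · intro i _
        dsimp only
        split_ifs with h
        · exact hts (Finset.coe_mem _)
        · exact hy₀
      · dsimp only
        rw [← hwx]
        rw [← pad_sum t hc (fun y => w y • y)]
        apply Finset.sum_congr rfl
        intro i _
        split_ifs with h <;> simp
    · rintro y ⟨⟨w, p⟩, ⟨⟨hw0, hw1⟩, hp⟩, rfl⟩
      exact (convex_convexHull ℝ s).sum_mem (fun i _ => hw0 i) hw1
        (fun i _ => subset_convexHull ℝ s (hp i (Set.mem_univ i)))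
  rw [key]
  exact ((isCompact_stdSimplex _ _).prod (isCompact_univ_pi fun _ => hs)).image
    (continuous_finset_sum _ fun i _ =>
      ((continuous_apply i).comp continuous_fst).smul ((continuous_apply i).comp continuous_snd))

/-- If `C ⊆ conv (insert ξ K)` and `w` makes a nonpositive inner product with `y - ξ` for all
`y ∈ K`, then the normalization of `w` is an outward normal to `C` at `ξ`. -/
lemma outward_of_sep {C K : Set E3} {ξ w : E3} (hCsub : C ⊆ convexHull ℝ (insert ξ K))
    (hwne : w ≠ 0) (hneg : ∀ y ∈ K, (inner ℝ (y - ξ) w : ℝ) ≤ 0) :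
    IsOutwardNormal C ξ ((‖w‖)⁻¹ • w) := by
  constructor
  · exact norm_smul_inv_norm hwne
  · intro x hx
    have hS0 : ∀ z ∈ insert ξ K, z ∈ {z : E3 | (inner ℝ z w : ℝ) ≤ (inner ℝ ξ w : ℝ)} := by
      rintro z (rfl | hz)
      · exact Set.mem_setOf_eq ▸ le_rfl
      · have := hneg z hz
        rw [inner_sub_left] at this
        show (inner ℝ z w : ℝ) ≤ (inner ℝ ξ w : ℝ)
        linarith
    have hconv : Convex ℝ {z : E3 | (inner ℝ z w : ℝ) ≤ (inner ℝ ξ w : ℝ)} :=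
      convex_halfSpace_le
        ⟨fun a b => inner_add_left a b w, fun c a => real_inner_smul_left a w c⟩ _
    have hxS : (inner ℝ x w : ℝ) ≤ (inner ℝ ξ w : ℝ) :=
      convexHull_min hS0 hconv (hCsub hx)
    have h1 : (inner ℝ (x - ξ) w : ℝ) ≤ 0 := by
      rw [inner_sub_left]; exact sub_nonpos.2 hxS
    rw [real_inner_smul_right]
    exact mul_nonpos_of_nonneg_of_nonpos (inv_nonneg.2 (norm_nonneg w)) h1

set_option maxHeartbeats 1000000 in
/-- For convex bodies `C₁ ⊆ C ⊆ C₂`, the set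
`Ext C \ (∂C₁ ∪ ∂C₂ ∪ closure(Sing C))` has no isolated points. -/
theorem stmt5 (C C₁ C₂ : Set E3)
    (hC : IsConvexBody C) (hC₁ : IsConvexBody C₁) (hC₂ : IsConvexBody C₂)
    (h₁ : C₁ ⊆ C) (h₂ : C ⊆ C₂)
    (ξ : E3)
    (hξ : ξ ∈ Set.extremePoints ℝ C \ (frontier C₁ ∪ frontier C₂ ∪ closure (SingPts C)))
    (ε : ℝ) (hε : 0 < ε) :
    ∃ η ∈ Set.extremePoints ℝ C \ (frontier C₁ ∪ frontier C₂ ∪ closure (SingPts C)),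
      η ∈ Metric.ball ξ ε ∧ η ≠ ξ := by
  classical
  obtain ⟨hξext, hξF⟩ := hξ
  set F : Set E3 := frontier C₁ ∪ frontier C₂ ∪ closure (SingPts C) with hFdef
  have hFclosed : IsClosed F :=
    (isClosed_frontier.union isClosed_frontier).union isClosed_closure
  obtain ⟨δ, hδpos, hδ⟩ := Metric.isOpen_iff.1 hFclosed.isOpen_compl ξ hξF
  set ε' := min ε δ with hε'def
  have hε'pos : 0 < ε' := lt_min hε hδpos
  by_contra hcon
  push_neg at hcon
  -- All extreme points in the small ball coincide with ξ
  have hclaim : ∀ η ∈ extremePoints ℝ C, η ∈ ball ξ ε' → η = ξ := by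
    intro η hη hηb
    have h1 : η ∈ ball ξ δ := ball_subset_ball (min_le_right ε δ) hηb
    have h2 : η ∈ ball ξ ε := ball_subset_ball (min_le_left ε δ) hηb
    exact hcon η ⟨hη, hδ h1⟩ h2
  set K := closure (extremePoints ℝ C \ ball ξ ε') with hKdef
  have hKC : K ⊆ C :=
    closure_minimal (Set.diff_subset.trans extremePoints_subset) hC.1.isClosed
  have hKcomp : IsCompact K := hC.1.of_isClosed_subset isClosed_closure hKC
  have hξK : ξ ∉ K := by
    intro h
    have hsub : K ⊆ (ball ξ ε')ᶜ :=
      closure_minimal (fun y hy => hy.2) isOpen_ball.isClosed_compl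
    exact hsub h (mem_ball_self hε'pos)
  have hExtsub : extremePoints ℝ C ⊆ insert ξ K := by
    intro η hη
    by_cases hb : η ∈ ball ξ ε'
    · rw [hclaim η hη hb]; exact Set.mem_insert _ _
    · exact Set.mem_insert_of_mem _ (subset_closure ⟨hη, hb⟩)
  have hCsub : C ⊆ convexHull ℝ (insert ξ K) := by
    have hcomp : IsCompact (convexHull ℝ (insert ξ K)) := by
      apply isCompact_convexHull_E3
      rw [Set.insert_eq]
      exact isCompact_singleton.union hKcomp
    calc C = closure (convexHull ℝ (extremePoints ℝ C)) :=
          (closure_convexHull_extremePoints hC.1 hC.2.1).symm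
      _ ⊆ closure (convexHull ℝ (insert ξ K)) := closure_mono (convexHull_mono hExtsub)
      _ = convexHull ℝ (insert ξ K) := hcomp.isClosed.closure_eq
  -- K is nonempty
  have hKne : K.Nonempty := by
    by_contra hne
    rw [Set.not_nonempty_iff_eq_empty] at hne
    have hsing : C ⊆ ({ξ} : Set E3) := by
      have := hCsub
      rw [hne] at this
      simpa [convexHull_singleton] using this
    obtain ⟨x, hx⟩ := hC.2.2
    obtain ⟨r, hrpos, hrball⟩ := Metric.isOpen_iff.1 isOpen_interior x hx
    have hx1 : x = ξ := hsing (interior_subset hx)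
    have hx2 : x + (r/2) • (EuclideanSpace.single (0 : Fin 3) (1:ℝ)) = ξ := by
      apply hsing
      apply interior_subset
      apply hrball
      rw [mem_ball_iff_norm]
      have : ‖(r/2) • (EuclideanSpace.single (0 : Fin 3) (1:ℝ))‖ = r/2 := by
        rw [norm_smul, EuclideanSpace.norm_single]
        simp [abs_of_pos, hrpos, abs_of_nonneg (by linarith : (0:ℝ) ≤ r/2)]
      simp only [add_sub_cancel_left]
      rw [this]; linarith
    rw [hx1] at hx2
    have hz : (r/2) • (EuclideanSpace.single (0 : Fin 3) (1:ℝ)) = 0 :=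
      add_eq_left.mp hx2
    have hnz : ((r:ℝ)/2) ≠ 0 := by positivity
    rcases smul_eq_zero.1 hz with h | h
    · exact hnz h
    · have h1 : ‖EuclideanSpace.single (0 : Fin 3) (1:ℝ)‖ = 1 := by
        rw [EuclideanSpace.norm_single]; simp
      rw [h] at h1; simp at h1
  obtain ⟨y₀, hy₀K⟩ := hKne
  -- Separate ξ from the convex hull of K
  set C' := convexHull ℝ K with hC'def
  have hC'comp : IsCompact C' := isCompact_convexHull_E3 hKcomp
  have hC'C : C' ⊆ C := convexHull_min hKC hC.2.1
  have hξC' : ξ ∉ C' := by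
    intro h
    have h2 : ξ ∈ extremePoints ℝ C' :=
      inter_extremePoints_subset_extremePoints_of_subset hC'C ⟨h, hξext⟩
    exact hξK (extremePoints_convexHull_subset h2)
  obtain ⟨f, u, hfu, huξ⟩ :=
    geometric_hahn_banach_closed_point (convex_convexHull ℝ K) hC'comp.isClosed hξC'
  set v := (InnerProductSpace.toDual ℝ E3).symm f with hvdef
  have hvx : ∀ x : E3, (inner ℝ v x : ℝ) = f x := fun x => InnerProductSpace.toDual_symm_apply
  have hvne : v ≠ 0 := by
    intro h
    have h1 := hfu y₀ (subset_convexHull ℝ K hy₀K)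
    have h2 : f y₀ = 0 := by rw [← hvx, h, inner_zero_left]
    have h3 : f ξ = 0 := by rw [← hvx, h, inner_zero_left]
    linarith
  set m := f ξ - u with hmdef
  have hm : 0 < m := by simp only [hmdef]; linarith
  -- bound on ‖y - ξ‖ on C
  obtain ⟨M, hM⟩ := hC.1.exists_bound_of_continuousOn
    (f := fun y : E3 => y - ξ) ((continuous_id.sub continuous_const).continuousOn)
  have hM0 : 0 ≤ M := le_trans (by simp) (hM ξ (extremePoints_subset hξext))
  -- a unit vector orthogonal to v
  haveI : Fact (Module.finrank ℝ E3 = 2 + 1) := ⟨by simp [finrank_euclideanSpace_fin]⟩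
  have hfr : Module.finrank ℝ ((Submodule.span ℝ {v})ᗮ : Submodule ℝ E3) = 2 :=
    Submodule.finrank_orthogonal_span_singleton hvne
  haveI : Nontrivial ((Submodule.span ℝ {v})ᗮ : Submodule ℝ E3) := by
    apply Module.nontrivial_of_finrank_pos (R := ℝ)
    rw [hfr]; norm_num
  obtain ⟨e₀, he₀⟩ := exists_ne (0 : ((Submodule.span ℝ {v})ᗮ : Submodule ℝ E3))
  have he0ne : (e₀ : E3) ≠ 0 := fun h => he₀ (Subtype.ext h)
  set e := (‖(e₀ : E3)‖)⁻¹ • (e₀ : E3) with hedef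
  have hene : ‖e‖ = 1 := norm_smul_inv_norm he0ne
  have hveorth : (inner ℝ v (e₀ : E3) : ℝ) = 0 :=
    e₀.2 v (Submodule.mem_span_singleton_self v)
  have hve : (inner ℝ v e : ℝ) = 0 := by
    rw [hedef, real_inner_smul_right, hveorth, mul_zero]
  set δ' := m / (2 * (M + 1)) with hδ'def
  have hδ'pos : 0 < δ' := div_pos hm (by linarith)
  set w₂ := v + δ' • e with hw₂def
  have hw₂e : (inner ℝ w₂ e : ℝ) = δ' := by
    rw [hw₂def, inner_add_left, hve, real_inner_smul_left, real_inner_self_eq_norm_sq, hene]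
    ring
  have hw₂ne : w₂ ≠ 0 := by
    intro h
    rw [h, inner_zero_left] at hw₂e
    exact absurd hw₂e.symm (ne_of_gt hδ'pos)
  -- estimates
  have h_est1 : ∀ y ∈ K, (inner ℝ (y - ξ) v : ℝ) ≤ -m := by
    intro y hy
    have h1 : f y < u := hfu y (subset_convexHull ℝ K hy)
    have : (inner ℝ (y - ξ) v : ℝ) = f y - f ξ := by
      rw [real_inner_comm, hvx (y - ξ), map_sub]
    rw [this, hmdef]; linarith
  have h_est2 : ∀ y ∈ K, (inner ℝ (y - ξ) w₂ : ℝ) ≤ 0 := by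
    intro y hy
    have h1 : (inner ℝ (y - ξ) w₂ : ℝ) = inner ℝ (y - ξ) v + δ' * inner ℝ (y - ξ) e := by
      rw [hw₂def, inner_add_right, real_inner_smul_right]
    have h2 : (inner ℝ (y - ξ) e : ℝ) ≤ M := by
      calc (inner ℝ (y - ξ) e : ℝ) ≤ ‖y - ξ‖ * ‖e‖ := real_inner_le_norm _ _
        _ = ‖y - ξ‖ := by rw [hene, mul_one]
        _ ≤ M := hM y (hKC hy)
    have h3 : δ' * M ≤ m / 2 := by
      rw [hδ'def, div_mul_eq_mul_div, div_le_div_iff₀ (by linarith) (by norm_num)]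
      nlinarith
    have h4 := h_est1 y hy
    have h5 : δ' * (inner ℝ (y - ξ) e : ℝ) ≤ δ' * M :=
      mul_le_mul_of_nonneg_left h2 (le_of_lt hδ'pos)
    rw [h1]; nlinarith
  -- the two outward normals
  have hn₁ : IsOutwardNormal C ξ ((‖v‖)⁻¹ • v) :=
    outward_of_sep hCsub hvne (fun y hy => le_trans (h_est1 y hy) (by linarith))
  have hn₂ : IsOutwardNormal C ξ ((‖w₂‖)⁻¹ • w₂) :=
    outward_of_sep hCsub hw₂ne h_est2
  have hn_ne : (‖v‖)⁻¹ • v ≠ (‖w₂‖)⁻¹ • w₂ := by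
    intro h
    have h1 : (inner ℝ ((‖v‖)⁻¹ • v) e : ℝ) = 0 := by
      rw [real_inner_smul_left, hve, mul_zero]
    have h2 : (inner ℝ ((‖w₂‖)⁻¹ • w₂) e : ℝ) = (‖w₂‖)⁻¹ * δ' := by
      rw [real_inner_smul_left, hw₂e]
    rw [h, h2] at h1
    have : (‖w₂‖ : ℝ)⁻¹ > 0 := inv_pos.2 (norm_pos_iff.2 hw₂ne)
    nlinarith
  -- ξ is on the frontier of C
  have hξfr : ξ ∈ frontier C := by
    rw [hC.1.isClosed.frontier_eq]
    refine ⟨extremePoints_subset hξext, ?_⟩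
    intro hin
    obtain ⟨r, hrpos, hrball⟩ := Metric.isOpen_iff.1 isOpen_interior ξ hin
    have hnorm : ‖(r/2) • e‖ = r/2 := by
      rw [norm_smul, hene, mul_one, Real.norm_eq_abs, abs_of_pos (by linarith)]
    have ha : ξ + (r/2) • e ∈ C := by
      apply interior_subset
      apply hrball
      rw [mem_ball_iff_norm, add_sub_cancel_left, hnorm]
      linarith
    have hb : ξ - (r/2) • e ∈ C := by
      apply interior_subset
      apply hrball
      rw [mem_ball_iff_norm, sub_sub_cancel_left, norm_neg, hnorm]
      linarith
    have hmid : (1/2 : ℝ) • (ξ + (r/2) • e) + (1/2 : ℝ) • (ξ - (r/2) • e) = ξ := by module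
    have hseg : ξ ∈ openSegment ℝ (ξ + (r/2) • e) (ξ - (r/2) • e) := by
      rw [openSegment]
      exact ⟨1/2, 1/2, by norm_num, by norm_num, by norm_num, hmid⟩
    have hab := hξext.2 ha hb hseg
    have hz : (r/2) • e = 0 := add_eq_left.mp hab
    rw [hz, norm_zero] at hnorm
    linarith
  have hsing : ξ ∈ SingPts C := ⟨hξfr, _, _, hn_ne, hn₁, hn₂⟩
  exact hξF (Or.inr (subset_closure hsing))
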